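/- For any boy b and girl g, at most one rotation moves b to g (i.e., makes g become b's partner) and at most one rotation moves b from g; moreover, if ρ₁ moves b to g and ρ₂ moves b from g, then ρ₁ strictly precedes ρ₂ in the rotation poset. -/

import Mathlib

/-- `rB b g` is the rank boy `b` gives girl `g` (smaller = more preferred), and
`rG g b` the rank girl `g` gives boy `b`.  A matching (bijection) `M` is stable if
no pair `(b, g)` prefer each other to their partners. -/
def StableM {B G : Type*} (rB : B → G → ℕ) (rG : G → B → ℕ) (M : B ≃ G) : Prop :=
  ∀ (b : B) (g : G), ¬ (rB b g < rB b (M b) ∧ rG g b < rG g (M.symm g))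

/-- The total weight of a matching. -/
def matchWeight {B G : Type*} [Fintype B] (w : B → G → ℚ) (M : B ≃ G) : ℚ :=
  ∑ b, w b (M b)

/-- A maximum weight stable matching. -/
def MaxWtStable {B G : Type*} [Fintype B] (rB : B → G → ℕ) (rG : G → B → ℕ)
    (w : B → G → ℚ) (M : B ≃ G) : Prop :=
  StableM rB rG M ∧ ∀ N : B ≃ G, StableM rB rG N → matchWeight w N ≤ matchWeight w M

/-- A rotation: a cyclic sequence of `r ≥ 2` distinct pairs `(b_i, g_i)`.
Indices live in `ZMod r` so that `i + 1` wraps around. -/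
structure Rotation (B G : Type*) where
  r : ℕ
  two_le : 2 ≤ r
  bs : ZMod r → B
  gs : ZMod r → G
  inj_bs : Function.Injective bs
  inj_gs : Function.Injective gs

/-- `ρ` is exposed in `M`: each `b_i` is matched to `g_i`, and `g_{i+1} = s_M(b_i)` is
the first girl on `b_i`'s list preferring `b_i` to her `M`-partner. -/
def Exposed {B G : Type*} (rB : B → G → ℕ) (rG : G → B → ℕ) (M : B ≃ G)
    (ρ : Rotation B G) : Prop :=
  (∀ i, M (ρ.bs i) = ρ.gs i) ∧
    (∀ i, rG (ρ.gs (i + 1)) (ρ.bs i) < rG (ρ.gs (i + 1)) (M.symm (ρ.gs (i + 1)))) ∧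
    (∀ i, ∀ g : G, rB (ρ.bs i) g < rB (ρ.bs i) (ρ.gs (i + 1)) →
      ¬ (rG g (ρ.bs i) < rG g (M.symm g)))

/-- `M'` results from `M` by eliminating the rotation `ρ` (exposed in `M`):
each `b_i` moves from `g_i` to `g_{i+1}`, everyone else keeps their partner. -/
def Eliminates {B G : Type*} (rB : B → G → ℕ) (rG : G → B → ℕ)
    (M : B ≃ G) (ρ : Rotation B G) (M' : B ≃ G) : Prop :=
  Exposed rB rG M ρ ∧ (∀ i, M' (ρ.bs i) = ρ.gs (i + 1)) ∧
    ∀ b : B, (∀ i, b ≠ ρ.bs i) → M' b = M b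

/-- `ElimChain rB rG M L M'`: the list `L` of rotations can be eliminated one after
another starting from `M` and ending at `M'`. -/
def ElimChain {B G : Type*} (rB : B → G → ℕ) (rG : G → B → ℕ) :
    (B ≃ G) → List (Rotation B G) → (B ≃ G) → Prop
  | M, [], M' => M = M'
  | M, ρ :: L, M' => ∃ N : B ≃ G, Eliminates rB rG M ρ N ∧ ElimChain rB rG N L M'

/-- The boy-optimal stable matching. -/
def BoyOptimal {B G : Type*} (rB : B → G → ℕ) (rG : G → B → ℕ) (M₀ : B ≃ G) : Prop :=
  StableM rB rG M₀ ∧ ∀ M : B ≃ G, StableM rB rG M → ∀ b, rB b (M₀ b) ≤ rB b (M b)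

/-- The girl-optimal stable matching. -/
def GirlOptimal {B G : Type*} (rB : B → G → ℕ) (rG : G → B → ℕ) (Mz : B ≃ G) : Prop :=
  StableM rB rG Mz ∧ ∀ M : B ≃ G, StableM rB rG M → ∀ g, rG g (Mz.symm g) ≤ rG g (M.symm g)

/-- `ρ` is a rotation of the instance: it is exposed in some stable matching. -/
def IsRotation {B G : Type*} (rB : B → G → ℕ) (rG : G → B → ℕ) (ρ : Rotation B G) : Prop :=
  ∃ M : B ≃ G, StableM rB rG M ∧ Exposed rB rG M ρ

/-- The set of pairs of a rotation (rotations are identified up to cyclic shift by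
having equal pair sets). -/
def rotPairs {B G : Type*} (ρ : Rotation B G) : Set (B × G) :=
  {p | ∃ i, p = (ρ.bs i, ρ.gs i)}

/-- `ρ` moves `b` to `g`: after eliminating `ρ`, `b` is matched to `g`. -/
def MovesTo {B G : Type*} (ρ : Rotation B G) (b : B) (g : G) : Prop :=
  ∃ i, ρ.bs i = b ∧ ρ.gs (i + 1) = g

/-- `ρ` moves `b` from `g`: before eliminating `ρ`, `b` is matched to `g`. -/
def MovesFrom {B G : Type*} (ρ : Rotation B G) (b : B) (g : G) : Prop :=
  ∃ i, ρ.bs i = b ∧ ρ.gs i = g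

/-- `ρ'` precedes `ρ` in the rotation poset: `ρ'` is eliminated (up to cyclic shift)
in every sequence of eliminations from the boy-optimal matching `M₀` to a stable
matching in which `ρ` is exposed. -/
def Precedes {B G : Type*} (rB : B → G → ℕ) (rG : G → B → ℕ)
    (ρ' ρ : Rotation B G) : Prop :=
  ∀ (M₀ : B ≃ G) (L : List (Rotation B G)) (M : B ≃ G),
    BoyOptimal rB rG M₀ → ElimChain rB rG M₀ L M → Exposed rB rG M ρ →
      ∃ ρ'' ∈ L, rotPairs ρ'' = rotPairs ρ'

set_option linter.unusedSectionVars false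
set_option linter.unnecessarySimpa false
set_option maxHeartbeats 1000000
namespace RotAux

variable {B G : Type*} {rB : B → G → ℕ} {rG : G → B → ℕ}

lemma zmod_succ_ne (ρ : Rotation B G) (i : ZMod ρ.r) : i + 1 ≠ i := by
  haveI : NeZero ρ.r := ⟨by have := ρ.two_le; omega⟩
  haveI : Fact (1 < ρ.r) := ⟨by have := ρ.two_le; omega⟩
  intro h
  have : (1 : ZMod ρ.r) = 0 := by
    have := congrArg (· - i) h; simpa using this
  exact one_ne_zero this

lemma gs_succ_ne (ρ : Rotation B G) (i : ZMod ρ.r) : ρ.gs (i + 1) ≠ ρ.gs i :=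
  fun h => zmod_succ_ne ρ i (ρ.inj_gs h)

/-- basic rotation fact: each boy strictly prefers his current partner to his successor. -/
lemma rank_lt_succ (hrB : ∀ b, Function.Injective (rB b)) {M : B ≃ G} (hM : StableM rB rG M)
    {ρ : Rotation B G} (hexp : Exposed rB rG M ρ) (i : ZMod ρ.r) :
    rB (ρ.bs i) (ρ.gs i) < rB (ρ.bs i) (ρ.gs (i + 1)) := by
  obtain ⟨h1, h2, h3⟩ := hexp
  have hst := hM (ρ.bs i) (ρ.gs (i + 1))
  push_neg at hst
  have hne : rB (ρ.bs i) (ρ.gs (i+1)) ≠ rB (ρ.bs i) (ρ.gs i) :=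
    fun h => gs_succ_ne ρ i (hrB _ h)
  rcases lt_or_ge (rB (ρ.bs i) (ρ.gs (i+1))) (rB (ρ.bs i) (ρ.gs i)) with h | h
  · rw [← h1 i] at h
    exact absurd (h2 i) (not_lt.2 (hst h))
  · omega

section Elim
variable {M : B ≃ G} {ρ : Rotation B G}

open Classical in
/-- The matching obtained by eliminating an exposed rotation. -/
noncomputable def elim (M : B ≃ G) (ρ : Rotation B G) (hexp : Exposed rB rG M ρ) : B ≃ G where
  toFun b := if h : ∃ i, b = ρ.bs i then ρ.gs (Classical.choose h + 1) else M b
  invFun y := if h : ∃ j, y = ρ.gs j then ρ.bs (Classical.choose h - 1) else M.symm y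
  left_inv := by
    intro b
    dsimp only
    by_cases h : ∃ i, b = ρ.bs i
    · rw [dif_pos h]
      have h2 : ∃ j, ρ.gs (Classical.choose h + 1) = ρ.gs j := ⟨_, rfl⟩
      rw [dif_pos h2]
      have := ρ.inj_gs (Classical.choose_spec h2)
      rw [← this]
      simp only [add_sub_cancel_right]
      exact (Classical.choose_spec h).symm
    · rw [dif_neg h]
      have h2 : ¬ ∃ j, M b = ρ.gs j := by
        rintro ⟨j, hj⟩
        exact h ⟨j, M.injective (by rw [hj, hexp.1 j])⟩
      rw [dif_neg h2, Equiv.symm_apply_apply]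
  right_inv := by
    intro y
    dsimp only
    by_cases h : ∃ j, y = ρ.gs j
    · rw [dif_pos h]
      have h2 : ∃ i, ρ.bs (Classical.choose h - 1) = ρ.bs i := ⟨_, rfl⟩
      rw [dif_pos h2]
      have := ρ.inj_bs (Classical.choose_spec h2)
      rw [← this]
      simp only [sub_add_cancel]
      exact (Classical.choose_spec h).symm
    · rw [dif_neg h]
      have h2 : ¬ ∃ i, M.symm y = ρ.bs i := by
        rintro ⟨i, hi⟩
        exact h ⟨i, by rw [← hexp.1 i, ← hi, Equiv.apply_symm_apply]⟩
      rw [dif_neg h2, Equiv.apply_symm_apply]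

lemma elim_bs (hexp : Exposed rB rG M ρ) (i : ZMod ρ.r) :
    elim M ρ hexp (ρ.bs i) = ρ.gs (i + 1) := by
  classical
  have h : ∃ j, ρ.bs i = ρ.bs j := ⟨i, rfl⟩
  show (if h : ∃ j, ρ.bs i = ρ.bs j then ρ.gs (Classical.choose h + 1) else M (ρ.bs i)) = _
  rw [dif_pos h]
  exact congrArg (fun j => ρ.gs (j + 1)) (ρ.inj_bs (Classical.choose_spec h)).symm

lemma elim_not_bs (hexp : Exposed rB rG M ρ) {b : B} (hb : ∀ i, b ≠ ρ.bs i) :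
    elim M ρ hexp b = M b := by
  classical
  have h : ¬ ∃ i, b = ρ.bs i := by rintro ⟨i, hi⟩; exact hb i hi
  show (if h : ∃ i, b = ρ.bs i then ρ.gs (Classical.choose h + 1) else M b) = _
  rw [dif_neg h]

lemma elim_spec (hexp : Exposed rB rG M ρ) : Eliminates rB rG M ρ (elim M ρ hexp) :=
  ⟨hexp, elim_bs hexp, fun _ hb => elim_not_bs hexp hb⟩

lemma eliminates_unique {M' M'' : B ≃ G} (h' : Eliminates rB rG M ρ M')
    (h'' : Eliminates rB rG M ρ M'') : M' = M'' := by
  apply Equiv.ext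
  intro b
  by_cases h : ∃ i, b = ρ.bs i
  · obtain ⟨i, rfl⟩ := h
    rw [h'.2.1 i, h''.2.1 i]
  · push_neg at h
    rw [h'.2.2 b h, h''.2.2 b h]

lemma eliminates_eq_elim {M' : B ≃ G} (h' : Eliminates rB rG M ρ M') :
    M' = elim M ρ h'.1 := eliminates_unique h' (elim_spec h'.1)

/-- partners weakly decrease in boy preference at an elimination step -/
lemma elim_step_le (hrB : ∀ b, Function.Injective (rB b)) (hM : StableM rB rG M)
    {M' : B ≃ G} (h : Eliminates rB rG M ρ M') (b : B) : rB b (M b) ≤ rB b (M' b) := by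
  by_cases hb : ∃ i, b = ρ.bs i
  · obtain ⟨i, rfl⟩ := hb
    rw [h.2.1 i, h.1.1 i]
    exact le_of_lt (rank_lt_succ hrB hM h.1 i)
  · push_neg at hb
    rw [h.2.2 b hb]

lemma elim_step_lt (hrB : ∀ b, Function.Injective (rB b)) (hM : StableM rB rG M)
    {M' : B ≃ G} (h : Eliminates rB rG M ρ M') (i : ZMod ρ.r) :
    rB (ρ.bs i) (M (ρ.bs i)) < rB (ρ.bs i) (M' (ρ.bs i)) := by
  rw [h.2.1 i, h.1.1 i]
  exact rank_lt_succ hrB hM h.1 i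

/-- symm values of the eliminated matching -/
lemma elim_symm_gs {M' : B ≃ G} (h : Eliminates rB rG M ρ M') (i : ZMod ρ.r) :
    M'.symm (ρ.gs (i + 1)) = ρ.bs i := by
  rw [← h.2.1 i, Equiv.symm_apply_apply]

lemma elim_symm_not_gs {M' : B ≃ G} (h : Eliminates rB rG M ρ M') {y : G}
    (hy : ∀ j, y ≠ ρ.gs j) : M'.symm y = M.symm y := by
  have hb : ∀ i, M.symm y ≠ ρ.bs i := by
    intro i hi
    exact hy i (by rw [← h.1.1 i, ← hi, Equiv.apply_symm_apply])
  have h2 : M' (M.symm y) = y := by rw [h.2.2 _ hb, Equiv.apply_symm_apply]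
  exact (Equiv.symm_apply_eq M').2 h2.symm

/-- girls weakly improve at an elimination step -/
lemma elim_girl_le {M' : B ≃ G} (h : Eliminates rB rG M ρ M') (y : G) :
    rG y (M'.symm y) ≤ rG y (M.symm y) := by
  by_cases hy : ∃ j, y = ρ.gs j
  · obtain ⟨j, rfl⟩ := hy
    have hj : ρ.gs j = ρ.gs ((j - 1) + 1) := by rw [sub_add_cancel]
    rw [hj, elim_symm_gs h (j-1)]
    have := h.1.2.1 (j - 1)
    rw [← hj] at this ⊢
    -- this : rG (ρ.gs j) (ρ.bs (j-1)) < rG (ρ.gs j) (M.symm (ρ.gs j))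
    exact le_of_lt (by rw [hj] at this ⊢; exact this)
  · push_neg at hy
    rw [elim_symm_not_gs h hy]

/-- elimination preserves stability -/
lemma elim_stable (hM : StableM rB rG M) {M' : B ≃ G} (h : Eliminates rB rG M ρ M') :
    StableM rB rG M' := by
  intro m y hblock
  obtain ⟨hb1, hb2⟩ := hblock
  have hy : rG y m < rG y (M.symm y) := lt_of_lt_of_le hb2 (elim_girl_le h y)
  by_cases hm : ∃ i, m = ρ.bs i
  · obtain ⟨i, rfl⟩ := hm
    rw [h.2.1 i] at hb1
    exact h.1.2.2 i y hb1 hy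
  · push_neg at hm
    rw [h.2.2 m hm] at hb1
    exact hM m y ⟨hb1, hy⟩

end Elim
end RotAux

set_option linter.dupNamespace false
namespace RotAux
variable {B G : Type*} [Fintype B] {rB : B → G → ℕ} {rG : G → B → ℕ}

lemma pair_bs {ρ : Rotation B G} {b : B} {w : G} (hp : (b, w) ∈ rotPairs ρ) :
    ∃ i, ρ.bs i = b ∧ ρ.gs i = w := by
  obtain ⟨i, hi⟩ := hp
  exact ⟨i, (congrArg Prod.fst hi).symm, (congrArg Prod.snd hi).symm⟩

section Chain
variable (hrB : ∀ b, Function.Injective (rB b))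
include hrB

lemma chain_stable {N M : B ≃ G} {L : List (Rotation B G)} (hN : StableM rB rG N)
    (hc : ElimChain rB rG N L M) : StableM rB rG M := by
  induction L generalizing N with
  | nil => exact hc ▸ hN
  | cons ρ L ih =>
    obtain ⟨N', hstep, hrest⟩ := hc
    exact ih (elim_stable hN hstep) hrest

lemma chain_le {N M : B ≃ G} {L : List (Rotation B G)} (hN : StableM rB rG N)
    (hc : ElimChain rB rG N L M) (b : B) : rB b (N b) ≤ rB b (M b) := by
  induction L generalizing N with
  | nil => exact hc ▸ le_refl _
  | cons ρ L ih =>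
    obtain ⟨N', hstep, hrest⟩ := hc
    exact le_trans (elim_step_le hrB hN hstep b) (ih (elim_stable hN hstep) hrest)

/-- potential function -/
def Phi (rB : B → G → ℕ) (M : B ≃ G) : ℕ := ∑ b, rB b (M b)

lemma step_phi_lt {N N' : B ≃ G} {ρ : Rotation B G} (hN : StableM rB rG N)
    (h : Eliminates rB rG N ρ N') : Phi rB N < Phi rB N' := by
  haveI : NeZero ρ.r := ⟨by have := ρ.two_le; omega⟩
  apply Finset.sum_lt_sum (fun b _ => elim_step_le hrB hN h b)
  exact ⟨ρ.bs 0, Finset.mem_univ _, elim_step_lt hrB hN h 0⟩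

lemma chain_phi_le {N M : B ≃ G} {L : List (Rotation B G)} (hN : StableM rB rG N)
    (hc : ElimChain rB rG N L M) : Phi rB N ≤ Phi rB M :=
  Finset.sum_le_sum (fun b _ => chain_le hrB hN hc b)

lemma chain_phi_lt {N M : B ≃ G} {ρ : Rotation B G} {L : List (Rotation B G)}
    (hN : StableM rB rG N) (hc : ElimChain rB rG N (ρ :: L) M) : Phi rB N < Phi rB M := by
  obtain ⟨N', hstep, hrest⟩ := hc
  exact lt_of_lt_of_le (step_phi_lt hrB hN hstep)
    (chain_phi_le hrB (elim_stable hN hstep) hrest)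

lemma chain_append {N P M : B ≃ G} {L₁ L₂ : List (Rotation B G)}
    (h₁ : ElimChain rB rG N L₁ P) (h₂ : ElimChain rB rG P L₂ M) :
    ElimChain rB rG N (L₁ ++ L₂) M := by
  induction L₁ generalizing N with
  | nil => exact h₁ ▸ h₂
  | cons ρ L ih =>
    obtain ⟨N', hstep, hrest⟩ := h₁
    exact ⟨N', hstep, ih hrest⟩

lemma reach {N M : B ≃ G} {L : List (Rotation B G)} (hN : StableM rB rG N)
    (hc : ElimChain rB rG N L M) {ρ : Rotation B G} (hmem : ρ ∈ L) {b : B} {w : G}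
    (hp : (b, w) ∈ rotPairs ρ) : rB b (N b) ≤ rB b w := by
  induction L generalizing N with
  | nil => simp at hmem
  | cons τ L ih =>
    obtain ⟨N', hstep, hrest⟩ := hc
    rcases List.mem_cons.1 hmem with rfl | hmem
    · obtain ⟨i, hi⟩ := hp
      obtain ⟨rfl, rfl⟩ : ρ.bs i = b ∧ ρ.gs i = w := by
        constructor <;> [exact (congrArg Prod.fst hi).symm; exact (congrArg Prod.snd hi).symm]
      rw [hstep.1.1 i]
    · exact le_trans (elim_step_le hrB hN hstep b) (ih (elim_stable hN hstep) hrest hmem)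

lemma head_move {N N' : B ≃ G} {τ : Rotation B G} (hN : StableM rB rG N)
    (hstep : Eliminates rB rG N τ N') {b : B} {w : G} (hp : (b, w) ∈ rotPairs τ) :
    N b = w ∧ rB b w < rB b (N' b) := by
  obtain ⟨i, rfl, rfl⟩ := pair_bs hp
  refine ⟨hstep.1.1 i, ?_⟩
  rw [hstep.2.1 i]
  exact rank_lt_succ hrB hN hstep.1 i

lemma uniq {N M : B ≃ G} {L : List (Rotation B G)} (hN : StableM rB rG N)
    (hc : ElimChain rB rG N L M) {ρ σ : Rotation B G} (hρ : ρ ∈ L) (hσ : σ ∈ L)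
    {b : B} {w : G} (hpρ : (b, w) ∈ rotPairs ρ) (hpσ : (b, w) ∈ rotPairs σ) : ρ = σ := by
  induction L generalizing N with
  | nil => simp at hρ
  | cons τ L ih =>
    obtain ⟨N', hstep, hrest⟩ := hc
    have hN' := elim_stable hN hstep
    have key : ∀ υ : Rotation B G, υ ∈ L → (b, w) ∈ rotPairs υ → (b,w) ∈ rotPairs τ → False := by
      intro υ hmem hp hpt
      have h1 := (head_move hrB hN hstep hpt).2
      have h2 := reach hrB hN' hrest hmem hp
      omega
    rcases List.mem_cons.1 hρ with rfl | hρ' <;> rcases List.mem_cons.1 hσ with rfl | hσ'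
    · rfl
    · exact absurd (key σ hσ' hpσ hpρ) not_false
    · exact absurd (key ρ hρ' hpρ hpσ) not_false
    · exact ih hN' hrest hρ' hσ'

/-- ordering of moves of a fixed boy along a chain -/
lemma cross {N M : B ≃ G} {L : List (Rotation B G)} (hN : StableM rB rG N)
    (hc : ElimChain rB rG N L M) {ρ σ : Rotation B G} (hρ : ρ ∈ L) (hσ : σ ∈ L)
    {b : B} {w₁ x₁ w₂ : G} {i : ZMod ρ.r}
    (hbi : ρ.bs i = b) (hgi : ρ.gs i = w₁) (hgi1 : ρ.gs (i+1) = x₁)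
    (hpσ : (b, w₂) ∈ rotPairs σ) (hlt : rB b w₁ < rB b w₂) : rB b x₁ ≤ rB b w₂ := by
  induction L generalizing N with
  | nil => simp at hρ
  | cons τ L ih =>
    obtain ⟨N', hstep, hrest⟩ := hc
    have hN' := elim_stable hN hstep
    rcases List.mem_cons.1 hρ with rfl | hρ' <;> rcases List.mem_cons.1 hσ with h2 | hσ'
    · -- same head: w₁ = N b = w₂, contradiction with hlt
      subst h2
      have e1 : N b = w₁ := by rw [← hbi, hstep.1.1 i, hgi]
      have e2 : N b = w₂ := (head_move hrB hN hstep hpσ).1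
      rw [e1] at e2
      rw [e2] at hlt
      exact absurd hlt (lt_irrefl _)
    · -- ρ is head, σ in tail: after step b is at x₁, reach gives x₁ ≤ w₂
      have e1 : N' b = x₁ := by rw [← hbi, hstep.2.1 i, hgi1]
      have h5 := reach hrB hN' hrest hσ' hpσ
      rw [e1] at h5
      exact h5
    · -- σ is head, ρ in tail: N b = w₂, and reach for ρ's pair gives w₂ ≤ ... contradiction
      subst h2
      have e2 : N b = w₂ := (head_move hrB hN hstep hpσ).1
      have e3 : rB b w₂ < rB b (N' b) := (head_move hrB hN hstep hpσ).2
      have h5 := reach hrB hN' hrest hρ' (⟨i, by rw [hbi, hgi]⟩ : (b, w₁) ∈ rotPairs ρ)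
      omega
    · exact ih hN' hrest hρ' hσ'

end Chain

/-- find the rotation that moves b to g in a chain -/
lemma find_mover {N M : B ≃ G} {L : List (Rotation B G)} (hN : StableM rB rG N)
    (hc : ElimChain rB rG N L M) {b : B} {g : G} (hne : N b ≠ g) (heq : M b = g) :
    ∃ ρ ∈ L, MovesTo ρ b g ∧ IsRotation rB rG ρ := by
  induction L generalizing N with
  | nil => exact absurd (hc ▸ heq) hne
  | cons τ L ih =>
    obtain ⟨N', hstep, hrest⟩ := hc
    have hN' := elim_stable hN hstep
    by_cases h : N' b = g
    · by_cases hb : ∃ i, b = τ.bs i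
      · obtain ⟨i, rfl⟩ := hb
        exact ⟨τ, List.mem_cons_self, ⟨i, rfl, by rw [← hstep.2.1 i, h]⟩, ⟨N, hN, hstep.1⟩⟩
      · push_neg at hb
        rw [hstep.2.2 b hb] at h
        exact absurd h hne
    · obtain ⟨ρ, hmem, hmv⟩ := ih hN' hrest h
      exact ⟨ρ, List.mem_cons_of_mem _ hmem, hmv⟩

section Lattice
variable [Fintype G] [DecidableEq G]
variable (hrB : ∀ b, Function.Injective (rB b)) (hrG : ∀ g, Function.Injective (rG g))

lemma symm_stable {M : B ≃ G} (hM : StableM rB rG M) : StableM rG rB M.symm := by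
  intro g b hblock
  rw [Equiv.symm_symm] at hblock
  exact hM b g ⟨hblock.2, hblock.1⟩

include hrB hrG in
lemma meet_exists {M N : B ≃ G} (hM : StableM rB rG M) (hN : StableM rB rG N) :
    ∃ K : B ≃ G, StableM rB rG K ∧ (∀ b, K b = M b ∨ K b = N b) ∧
      (∀ b, rB b (K b) ≤ rB b (M b) ∧ rB b (K b) ≤ rB b (N b)) := by
  classical
  set f : B → G := fun b => if rB b (M b) ≤ rB b (N b) then M b else N b with hf
  have hcase : ∀ b, f b = M b ∨ f b = N b := by
    intro b; by_cases h : rB b (M b) ≤ rB b (N b)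
    · exact Or.inl (if_pos h)
    · exact Or.inr (if_neg h)
  have hle : ∀ b, rB b (f b) ≤ rB b (M b) ∧ rB b (f b) ≤ rB b (N b) := by
    intro b; by_cases h : rB b (M b) ≤ rB b (N b)
    · rw [hf]; simp only [if_pos h]; omega
    · rw [hf]; simp only [if_neg h]; omega
  -- the key step: if f b = X b (as chosen) then girl f b weakly prefers her other partner...
  have hinj : Function.Injective f := by
    intro b b' heq
    by_contra hbb
    -- wlog-free case analysis
    have main : ∀ (P Q : B ≃ G), StableM rB rG P → StableM rB rG Q →
        ∀ (c c' : B), c ≠ c' → P c = Q c' → rB c (P c) ≤ rB c (Q c) →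
        rB c' (Q c') ≤ rB c' (P c') → False := by
      intro P Q hP hQ c c' hcc hpq h1 h2
      set w := P c with hw
      have hQc' : Q.symm w = c' := by rw [hpq]; exact Q.symm_apply_apply c'
      have hPc : P.symm w = c := P.symm_apply_apply c
      -- c strictly prefers w to Q c unless equal
      have h1' : rB c w < rB c (Q c) ∨ w = Q c := by
        rcases lt_or_eq_of_le h1 with h | h
        · exact Or.inl h
        · exact Or.inr (hrB c h)
      rcases h1' with h1' | h1'
      · -- (c, w) blocks Q unless w prefers her Q-partner c' to c
        have := hQ c w
        push_neg at this
        have hle2 := this h1'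
        rw [hQc'] at hle2
        -- girl w weakly prefers c' to c; it is strict since c ≠ c'
        have hlt2 : rG w c' < rG w c := by
          rcases lt_or_eq_of_le hle2 with h | h
          · exact h
          · exact absurd (hrG w h) (Ne.symm hcc)
        -- then (c', w) blocks P unless c' weakly prefers P c' to w
        have := hP c' w
        push_neg at this
        rw [hPc] at this
        have h3 : rB c' (P c') ≤ rB c' w := by
          by_contra hcon
          push_neg at hcon
          exact absurd hlt2 (not_lt.2 (this hcon))
        have h4 : rB c' w = rB c' (Q c') := by rw [hpq]
        have h5 : rB c' (P c') = rB c' (Q c') := le_antisymm (h4 ▸ h3) h2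
        have h6 : P c' = Q c' := hrB c' h5
        exact hcc (P.injective (by rw [h6, ← hpq]))
      · -- w = Q c: then Q c = w = Q c' so c = c'
        exact hcc (Q.injective (by rw [← h1', hpq]))
    rcases hcase b with h1 | h1 <;> rcases hcase b' with h2 | h2
    · exact hbb (M.injective (by rw [← h1, ← h2, heq]))
    · exact main M N hM hN b b' hbb (by rw [← h1, ← h2, heq]) ((h1 ▸ hle b).2) ((h2 ▸ hle b').1)
    · exact main N M hN hM b b' hbb (by rw [← h1, ← h2, heq]) ((h1 ▸ hle b).1) ((h2 ▸ hle b').2)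
    · exact hbb (N.injective (by rw [← h1, ← h2, heq]))
  have hbij : Function.Bijective f :=
    (Fintype.bijective_iff_injective_and_card f).2 ⟨hinj, Fintype.card_congr M⟩
  refine ⟨Equiv.ofBijective f hbij, ?_, fun b => hcase b, fun b => hle b⟩
  intro m y hblock
  obtain ⟨hb1, hb2⟩ := hblock
  set K := Equiv.ofBijective f hbij with hK
  have hKm : ∀ b, K b = f b := fun b => rfl
  have hy : f (K.symm y) = y := by rw [← hKm, Equiv.apply_symm_apply]
  rcases hcase (K.symm y) with h | h
  · -- y's K-partner is her M-partner
    have hMy : M (K.symm y) = y := by rw [← h]; exact hy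
    have : M.symm y = K.symm y := (Equiv.symm_apply_eq M).2 hMy.symm
    exact hM m y ⟨lt_of_lt_of_le hb1 (by rw [hKm]; exact (hle m).1), by rw [this]; exact hb2⟩
  · have hNy : N (K.symm y) = y := by rw [← h]; exact hy
    have : N.symm y = K.symm y := (Equiv.symm_apply_eq N).2 hNy.symm
    exact hN m y ⟨lt_of_lt_of_le hb1 (by rw [hKm]; exact (hle m).2), by rw [this]; exact hb2⟩

include hrB hrG in
lemma join_exists [DecidableEq B] {M N : B ≃ G} (hM : StableM rB rG M) (hN : StableM rB rG N) :
    ∃ T : B ≃ G, StableM rB rG T ∧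
      (∀ b, rB b (M b) ≤ rB b (T b) ∧ rB b (N b) ≤ rB b (T b)) := by
  obtain ⟨K, hK, hKcase, hKle⟩ := meet_exists hrG hrB (symm_stable hM) (symm_stable hN)
  refine ⟨K.symm, by simpa using symm_stable hK, ?_⟩
  have key : ∀ (P : B ≃ G), StableM rB rG P → (∀ w, rG w (K w) ≤ rG w (P.symm w)) →
      ∀ b, rB b (P b) ≤ rB b (K.symm b) := by
    intro P hP hle b
    set w := K.symm b with hw
    have hKw : K w = b := by rw [hw, Equiv.apply_symm_apply]
    by_cases hwP : w = P b
    · rw [← hwP]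
    · have h1 : rG w (K w) ≤ rG w (P.symm w) := hle w
      rw [hKw] at h1
      have hne : P.symm w ≠ b := fun hc => hwP (by rw [← hc, Equiv.apply_symm_apply])
      have h2 : rG w b < rG w (P.symm w) := by
        rcases lt_or_eq_of_le h1 with h | h
        · exact h
        · exact absurd (hrG w h).symm hne
      have h3 := hP b w
      push_neg at h3
      show rB b (P b) ≤ rB b w
      by_contra hcon
      push_neg at hcon
      exact absurd h2 (not_lt.2 (h3 hcon))
  intro b
  constructor
  · exact key M hM (fun w => (hKle w).1) b
  · exact key N hN (fun w => (hKle w).2) b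

include hrB hrG in
lemma exposed_below [DecidableEq B] {N M : B ≃ G} (hN : StableM rB rG N) (hM : StableM rB rG M)
    (hle : ∀ b, rB b (N b) ≤ rB b (M b)) (hne : N ≠ M) :
    ∃ (ρ : Rotation B G) (N' : B ≃ G), Eliminates rB rG N ρ N' ∧
      ∀ b, rB b (N' b) ≤ rB b (M b) := by
  classical
  set S : B → Prop := fun b => N b ≠ M b with hS
  have strict : ∀ b, S b → rB b (N b) < rB b (M b) := by
    intro b hb
    rcases lt_or_eq_of_le (hle b) with h | h
    · exact h
    · exact absurd (hrB b h) hb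
  have girlfact : ∀ b, S b → rG (M b) b < rG (M b) (N.symm (M b)) := by
    intro b hb
    have hmb : N.symm (M b) ≠ b := by
      intro h
      exact hb ((Equiv.symm_apply_eq N).1 h).symm
    have hSm : S (N.symm (M b)) := by
      intro hcon
      rw [Equiv.apply_symm_apply] at hcon
      exact hmb (M.injective hcon.symm)
    have h1 : rB (N.symm (M b)) (M b) < rB (N.symm (M b)) (M (N.symm (M b))) := by
      have := strict _ hSm
      rwa [Equiv.apply_symm_apply] at this
    have h2 := hM (N.symm (M b)) (M b)
    push_neg at h2
    have h3 := h2 h1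
    rw [Equiv.symm_apply_apply] at h3
    rcases lt_or_eq_of_le h3 with h | h
    · exact h
    · exact absurd (hrG _ h) (Ne.symm hmb)
  set P : B → G → Prop := fun b w => rG w b < rG w (N.symm w) ∧ rB b (N b) < rB b w with hP
  have hmin : ∀ b, ∃ w, S b → P b w ∧ (∀ y, P b y → rB b w ≤ rB b y) ∧ rB b w ≤ rB b (M b) := by
    intro b
    by_cases hb : S b
    · have hPM : P b (M b) := ⟨girlfact b hb, strict b hb⟩
      obtain ⟨w, hwmem, hwmin⟩ := Finset.exists_min_image
        (Finset.univ.filter fun w => P b w) (rB b)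
        ⟨M b, Finset.mem_filter.2 ⟨Finset.mem_univ _, hPM⟩⟩
      have hPw : P b w := (Finset.mem_filter.1 hwmem).2
      refine ⟨w, fun _ => ⟨hPw, fun y hy => hwmin y (Finset.mem_filter.2 ⟨Finset.mem_univ _, hy⟩), ?_⟩⟩
      exact hwmin (M b) (Finset.mem_filter.2 ⟨Finset.mem_univ _, hPM⟩)
    · exact ⟨N b, fun h => absurd h hb⟩
  choose sN hsN using hmin
  set f : B → B := fun b => if S b then N.symm (sN b) else b with hfdef
  have f_eq : ∀ b, S b → f b = N.symm (sN b) := fun b hb => if_pos hb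
  have f_S : ∀ b, S b → S (f b) := by
    intro b hb
    rw [f_eq b hb]
    obtain ⟨⟨hg, hrank⟩, hminb, hMb⟩ := hsN b hb
    set w := sN b with hw
    set m := N.symm w with hm
    intro hcon
    have hNm : N m = w := by rw [hm, Equiv.apply_symm_apply]
    have hMm : M m = w := by rw [← hcon, hNm]
    have h1 : rB b w < rB b (M b) := by
      rcases lt_or_eq_of_le hMb with h | h
      · exact h
      · exfalso
        have hwM : w = M b := hrB b h
        have : m = b := M.injective (hMm.trans hwM)
        rw [this] at hNm
        rw [← hNm] at hrank
        omega
    have h2 : rG w b < rG w (M.symm w) := by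
      rw [show M.symm w = m from (Equiv.symm_apply_eq M).2 hMm.symm]
      rw [hm]
      exact hg
    exact hM b w ⟨h1, h2⟩
  have f_ne : ∀ b, S b → f b ≠ b := by
    intro b hb hc
    rw [f_eq b hb] at hc
    have he : sN b = N b := (Equiv.symm_apply_eq N).1 hc
    have h2 := (hsN b hb).1.2
    rw [he] at h2
    exact lt_irrefl _ h2
  -- find a starting point
  obtain ⟨b₀, hb₀⟩ : ∃ b, S b := by
    by_contra hcon
    push_neg at hcon
    exact hne (Equiv.ext fun b => not_not.1 (hcon b))
  have iter_S : ∀ k, S (f^[k] b₀) := by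
    intro k
    induction k with
    | zero => exact hb₀
    | succ k ih => rw [Function.iterate_succ_apply']; exact f_S _ ih
  -- find a cycle
  obtain ⟨k, l, hkl, hkleq⟩ : ∃ k l : ℕ, k < l ∧ f^[k] b₀ = f^[l] b₀ := by
    obtain ⟨k, l, hkl, heq⟩ := Finite.exists_ne_map_eq_of_infinite (fun k : ℕ => f^[k] b₀)
    rcases lt_or_gt_of_ne hkl with h | h
    · exact ⟨k, l, h, heq⟩
    · exact ⟨l, k, h, heq.symm⟩
  have hT : ∃ m : ℕ, 0 < m ∧ ∃ j, f^[j + m] b₀ = f^[j] b₀ := by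
    refine ⟨l - k, by omega, k, ?_⟩
    rw [show k + (l - k) = l by omega]
    exact hkleq.symm
  classical
  set r := Nat.find hT with hrdef
  obtain ⟨hr0, j₀, hj₀⟩ := Nat.find_spec hT
  set c := f^[j₀] b₀ with hcdef
  have hrc : f^[r] c = c := by
    rw [hcdef, ← Function.iterate_add_apply, add_comm]
    exact hj₀
  have hcS : ∀ k, S (f^[k] c) := by
    intro k
    rw [hcdef, ← Function.iterate_add_apply]
    exact iter_S _
  have distinct : ∀ a b : ℕ, a < b → b < r → f^[a] c ≠ f^[b] c := by
    intro a b hab hbr heq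
    have : ∃ j, f^[j + (b - a)] b₀ = f^[j] b₀ := by
      refine ⟨j₀ + a, ?_⟩
      rw [show j₀ + a + (b - a) = b + j₀ by omega]
      rw [Function.iterate_add_apply]
      rw [show j₀ + a = a + j₀ by omega, Function.iterate_add_apply]
      exact heq.symm
    exact Nat.find_min hT (by omega) ⟨by omega, this⟩
  have htwo : 2 ≤ r := by
    rcases Nat.lt_or_ge r 2 with h | h
    · interval_cases r
      · omega
      · exfalso
        have : f c = c := by simpa using hrc
        exact f_ne c (hcS 0) this
    · exact h
  haveI : NeZero r := ⟨by omega⟩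
  haveI : Fact (1 < r) := ⟨by omega⟩
  set ρ : Rotation B G := {
    r := r
    two_le := htwo
    bs := fun i => f^[i.val] c
    gs := fun i => N (f^[i.val] c)
    inj_bs := by
      intro i j hij
      by_contra hne2
      have hv : i.val ≠ j.val := fun q => hne2 (ZMod.val_injective r q)
      rcases lt_or_gt_of_ne hv with h | h
      · exact distinct _ _ h (ZMod.val_lt j) hij
      · exact distinct _ _ h (ZMod.val_lt i) hij.symm
    inj_gs := by
      intro i j hij
      by_contra hne2
      have hv : i.val ≠ j.val := fun q => hne2 (ZMod.val_injective r q)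
      have := N.injective hij
      rcases lt_or_gt_of_ne hv with h | h
      · exact distinct _ _ h (ZMod.val_lt j) this
      · exact distinct _ _ h (ZMod.val_lt i) this.symm } with hρdef
  have bs_succ : ∀ i : ZMod r, ρ.bs (i + 1) = f (ρ.bs i) := by
    intro i
    show f^[(i+1).val] c = f (f^[i.val] c)
    rw [show f (f^[i.val] c) = f^[i.val + 1] c from (Function.iterate_succ_apply' f i.val c).symm]
    have hval : (i + 1).val = (i.val + 1) % r := by
      rw [ZMod.val_add, ZMod.val_one]
    rcases Nat.lt_or_ge (i.val + 1) r with h | h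
    · rw [hval, Nat.mod_eq_of_lt h]
    · have hival : i.val = r - 1 := by have := ZMod.val_lt i; omega
      have : (i.val + 1) % r = 0 := by rw [hival]; rw [show r - 1 + 1 = r by omega]; simp
      rw [hval, this]
      show c = f^[i.val + 1] c
      rw [hival, show r - 1 + 1 = r by omega, hrc]
  have hSbs : ∀ i : ZMod r, S (ρ.bs i) := fun i => hcS i.val
  have gs_succ : ∀ i : ZMod r, ρ.gs (i + 1) = sN (ρ.bs i) := by
    intro i
    show N (ρ.bs (i + 1)) = sN (ρ.bs i)
    rw [bs_succ i, f_eq _ (hSbs i), Equiv.apply_symm_apply]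
  have hexp : Exposed rB rG N ρ := by
    refine ⟨fun i => rfl, fun i => ?_, fun i y hy => ?_⟩
    · rw [gs_succ i]
      exact ((hsN _ (hSbs i)).1).1
    · rw [gs_succ i] at hy
      intro hcon
      obtain ⟨⟨hg, hrank⟩, hminb, hMb⟩ := hsN _ (hSbs i)
      rcases Nat.lt_trichotomy (rB (ρ.bs i) y) (rB (ρ.bs i) (N (ρ.bs i))) with h | h | h
      · exact hN (ρ.bs i) y ⟨(by rw [(rfl : N (ρ.bs i) = ρ.gs i)] at h; exact h), hcon⟩
      · have : y = N (ρ.bs i) := hrB _ h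
        rw [this, Equiv.symm_apply_apply] at hcon
        exact lt_irrefl _ hcon
      · have := hminb y ⟨hcon, h⟩
        omega
  refine ⟨ρ, elim N ρ hexp, elim_spec hexp, ?_⟩
  intro b
  by_cases hbmem : ∃ i, b = ρ.bs i
  · obtain ⟨i, rfl⟩ := hbmem
    rw [elim_bs hexp i, gs_succ i]
    exact (hsN _ (hSbs i)).2.2
  · push_neg at hbmem
    rw [elim_not_bs hexp hbmem]
    exact hle b

include hrB hrG in
lemma chain_exists [DecidableEq B] {N M : B ≃ G} (hN : StableM rB rG N) (hM : StableM rB rG M)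
    (hle : ∀ b, rB b (N b) ≤ rB b (M b)) : ∃ L, ElimChain rB rG N L M := by
  classical
  obtain ⟨k, hk⟩ : ∃ k, Phi rB M - Phi rB N ≤ k := ⟨_, le_refl _⟩
  induction k generalizing N with
  | zero =>
    by_cases hne : N = M
    · exact ⟨[], hne⟩
    · exfalso
      obtain ⟨ρ, N', hstep, hle'⟩ := exposed_below hrB hrG hN hM hle hne
      have h1 := step_phi_lt hrB hN hstep
      have h2 : Phi rB N' ≤ Phi rB M := Finset.sum_le_sum (fun b _ => hle' b)
      omega
  | succ k ih =>
    by_cases hne : N = M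
    · exact ⟨[], hne⟩
    · obtain ⟨ρ, N', hstep, hle'⟩ := exposed_below hrB hrG hN hM hle hne
      have h1 := step_phi_lt hrB hN hstep
      have h2 : Phi rB N' ≤ Phi rB M := Finset.sum_le_sum (fun b _ => hle' b)
      obtain ⟨L, hL⟩ := ih (elim_stable hN hstep) hle' (by omega)
      exact ⟨ρ :: L, N', hstep, hL⟩

include hrB in
lemma succ_unique {N : B ≃ G} {ρ σ : Rotation B G} (heρ : Exposed rB rG N ρ)
    (heσ : Exposed rB rG N σ) {i : ZMod ρ.r} {j : ZMod σ.r} (hb : ρ.bs i = σ.bs j) :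
    ρ.gs (i + 1) = σ.gs (j + 1) := by
  have h1 := heρ.2.1 i
  have h2 := heσ.2.1 j
  rw [hb] at h1
  rcases Nat.lt_trichotomy (rB (σ.bs j) (ρ.gs (i+1))) (rB (σ.bs j) (σ.gs (j+1))) with h | h | h
  · exact absurd h1 (heσ.2.2 j _ h)
  · exact hrB _ h
  · rw [← hb] at h h2
    exact absurd h2 (heρ.2.2 i _ h)

lemma bs_eq_symm_gs {N : B ≃ G} {ρ : Rotation B G} (he : Exposed rB rG N ρ) (i : ZMod ρ.r) :
    ρ.bs i = N.symm (ρ.gs i) := by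
  rw [← he.1 i, Equiv.symm_apply_apply]

include hrB in
lemma pairs_subset_of_common {N : B ≃ G} {ρ σ : Rotation B G} (heρ : Exposed rB rG N ρ)
    (heσ : Exposed rB rG N σ) {i : ZMod ρ.r} {j : ZMod σ.r} (hb : ρ.bs i = σ.bs j) :
    rotPairs ρ ⊆ rotPairs σ := by
  haveI : NeZero ρ.r := ⟨by have := ρ.two_le; omega⟩
  haveI : NeZero σ.r := ⟨by have := σ.two_le; omega⟩
  have main : ∀ k : ℕ, ρ.bs (i + (k : ZMod ρ.r)) = σ.bs (j + (k : ZMod σ.r)) := by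
    intro k
    induction k with
    | zero => simpa using hb
    | succ k ihk =>
      have hgs : ρ.gs (i + (k : ZMod ρ.r) + 1) = σ.gs (j + (k : ZMod σ.r) + 1) :=
        succ_unique hrB heρ heσ ihk
      have : ρ.bs (i + (k : ZMod ρ.r) + 1) = σ.bs (j + (k : ZMod σ.r) + 1) := by
        rw [bs_eq_symm_gs heρ, bs_eq_symm_gs heσ, hgs]
      have hc1 : ((k+1 : ℕ) : ZMod ρ.r) = (k : ZMod ρ.r) + 1 := by push_cast; ring
      have hc2 : ((k+1 : ℕ) : ZMod σ.r) = (k : ZMod σ.r) + 1 := by push_cast; ring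
      rw [hc1, hc2, ← add_assoc, ← add_assoc]
      exact this
  rintro ⟨b, w⟩ ⟨m, hm⟩
  set k := (m - i).val with hkdef
  have hik : i + (k : ZMod ρ.r) = m := by
    rw [hkdef]
    simp [ZMod.natCast_val, ZMod.cast_id]
  have hbs : ρ.bs m = σ.bs (j + (k : ZMod σ.r)) := by rw [← hik]; exact main k
  have hgs : ρ.gs m = σ.gs (j + (k : ZMod σ.r)) := by
    rw [← heρ.1 m, ← heσ.1 _, hbs]
  exact ⟨j + (k : ZMod σ.r), by rw [hm, hbs, hgs]⟩

include hrB in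
lemma pairs_eq_of_common {N : B ≃ G} {ρ σ : Rotation B G} (heρ : Exposed rB rG N ρ)
    (heσ : Exposed rB rG N σ) {b : B} {w : G} (h1 : (b, w) ∈ rotPairs ρ)
    (h2 : (b, w) ∈ rotPairs σ) : rotPairs ρ = rotPairs σ := by
  obtain ⟨i, hbi, -⟩ := pair_bs h1
  obtain ⟨j, hbj, -⟩ := pair_bs h2
  have hb : ρ.bs i = σ.bs j := by rw [hbi, hbj]
  exact Set.Subset.antisymm (pairs_subset_of_common hrB heρ heσ hb)
    (pairs_subset_of_common hrB heσ heρ hb.symm)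

include hrB in
lemma boys_disjoint {N : B ≃ G} {ρ σ : Rotation B G} (heρ : Exposed rB rG N ρ)
    (heσ : Exposed rB rG N σ) (hne : rotPairs ρ ≠ rotPairs σ) (i : ZMod ρ.r) (j : ZMod σ.r) :
    ρ.bs i ≠ σ.bs j := by
  intro hb
  have hgs : ρ.gs i = σ.gs j := by rw [← heρ.1 i, ← heσ.1 j, hb]
  exact hne (pairs_eq_of_common hrB heρ heσ ⟨i, rfl⟩ ⟨j, by rw [hb, hgs]⟩)

include hrB in
lemma girls_disjoint {N : B ≃ G} {ρ σ : Rotation B G} (heρ : Exposed rB rG N ρ)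
    (heσ : Exposed rB rG N σ) (hne : rotPairs ρ ≠ rotPairs σ) (i : ZMod ρ.r) (j : ZMod σ.r) :
    ρ.gs i ≠ σ.gs j := by
  intro hg
  exact boys_disjoint hrB heρ heσ hne i j
    (by rw [bs_eq_symm_gs heρ, bs_eq_symm_gs heσ, hg])

include hrB in
lemma commute_exposed {N N₁ : B ≃ G} {ρ σ : Rotation B G}
    (heρ : Exposed rB rG N ρ) (heσ : Exposed rB rG N σ) (hne : rotPairs ρ ≠ rotPairs σ)
    (h₁ : Eliminates rB rG N ρ N₁) : Exposed rB rG N₁ σ := by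
  refine ⟨fun j => ?_, fun j => ?_, fun j y hy hcon => ?_⟩
  · rw [h₁.2.2 _ (fun i hi => boys_disjoint hrB heρ heσ hne i j hi.symm), heσ.1 j]
  · rw [elim_symm_not_gs h₁ (fun k hk => girls_disjoint hrB heρ heσ hne k (j+1) hk.symm)]
    exact heσ.2.1 j
  · exact heσ.2.2 j y hy (lt_of_lt_of_le hcon (elim_girl_le h₁ y))

include hrB in
lemma commute_elim {N N₁ N₂ : B ≃ G} {ρ σ : Rotation B G}
    (heρ : Exposed rB rG N ρ) (heσ : Exposed rB rG N σ) (hne : rotPairs ρ ≠ rotPairs σ)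
    (h₁ : Eliminates rB rG N ρ N₁) (h₂ : Eliminates rB rG N σ N₂)
    {N₃ N₄ : B ≃ G} (h₃ : Eliminates rB rG N₁ σ N₃) (h₄ : Eliminates rB rG N₂ ρ N₄) :
    N₃ = N₄ := by
  apply Equiv.ext
  intro b
  by_cases hbσ : ∃ j, b = σ.bs j
  · obtain ⟨j, rfl⟩ := hbσ
    rw [h₃.2.1 j, h₄.2.2 _ (fun i hi => boys_disjoint hrB heρ heσ hne i j hi.symm), h₂.2.1 j]
  · push_neg at hbσ
    by_cases hbρ : ∃ i, b = ρ.bs i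
    · obtain ⟨i, rfl⟩ := hbρ
      rw [h₄.2.1 i, h₃.2.2 _ hbσ, h₁.2.1 i]
    · push_neg at hbρ
      rw [h₃.2.2 _ hbσ, h₄.2.2 _ hbρ, h₁.2.2 _ hbρ, h₂.2.2 _ hbσ]

include hrB in
/-- rotations with equal pair sets exposed in the same matching eliminate to the same matching -/
lemma same_pairs_same_elim {N N₁ N₂ : B ≃ G} {ρ σ : Rotation B G}
    (hpq : rotPairs ρ = rotPairs σ)
    (h₁ : Eliminates rB rG N ρ N₁) (h₂ : Eliminates rB rG N σ N₂) : N₁ = N₂ := by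
  apply Equiv.ext
  intro b
  by_cases hbρ : ∃ i, b = ρ.bs i
  · obtain ⟨i, rfl⟩ := hbρ
    have : (ρ.bs i, ρ.gs i) ∈ rotPairs σ := hpq ▸ ⟨i, rfl⟩
    obtain ⟨j, hbj, hgj⟩ := pair_bs this
    have hs : σ.gs (j+1) = ρ.gs (i+1) := succ_unique hrB h₂.1 h₁.1 hbj
    rw [h₁.2.1 i, ← hbj, h₂.2.1 j, hs]
  · push_neg at hbρ
    have hbσ : ∀ j, b ≠ σ.bs j := by
      intro j hj
      have : (σ.bs j, σ.gs j) ∈ rotPairs ρ := hpq ▸ ⟨j, rfl⟩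
      obtain ⟨i, hbi, -⟩ := pair_bs this
      exact hbρ i (by rw [hj, hbi])
    rw [h₁.2.2 _ hbρ, h₂.2.2 _ hbσ]

include hrB hrG in
/-- any two elimination chains between the same stable matchings consist of the
same rotations up to pair sets -/
lemma trace [DecidableEq B] {M : B ≃ G} (k : ℕ) :
    ∀ (N : B ≃ G) (L₁ L₂ : List (Rotation B G)), StableM rB rG N →
      Phi rB M - Phi rB N ≤ k → ElimChain rB rG N L₁ M → ElimChain rB rG N L₂ M →
      ∀ ρ ∈ L₂, ∃ σ ∈ L₁, rotPairs σ = rotPairs ρ := by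
  induction k with
  | zero =>
    intro N L₁ L₂ hN hk h₁ h₂ ρ hρ
    cases L₂ with
    | nil => simp at hρ
    | cons τ L =>
      exfalso
      have h3 := chain_phi_lt hrB hN h₂
      have h4 := chain_phi_le hrB hN h₁
      omega
  | succ k ih =>
    intro N L₁ L₂ hN hk h₁ h₂ ρ hρ
    cases L₂ with
    | nil => simp at hρ
    | cons ρ' L₂' =>
      obtain ⟨N₂, hstep₂, hrest₂⟩ := h₂
      cases L₁ with
      | nil =>
        exfalso
        have h3 := chain_phi_lt hrB hN (⟨N₂, hstep₂, hrest₂⟩ :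
          ElimChain rB rG N (ρ' :: L₂') M)
        have h4 : N = M := h₁
        rw [h4] at h3
        omega
      | cons σ L₁' =>
        obtain ⟨N₁, hstep₁, hrest₁⟩ := h₁
        have hN₁ := elim_stable hN hstep₁
        have hN₂ := elim_stable hN hstep₂
        have hφ₁ : Phi rB N < Phi rB N₁ := step_phi_lt hrB hN hstep₁
        have hφ₂ : Phi rB N < Phi rB N₂ := step_phi_lt hrB hN hstep₂
        have hφM₁ : Phi rB N₁ ≤ Phi rB M := chain_phi_le hrB hN₁ hrest₁
        have hφM₂ : Phi rB N₂ ≤ Phi rB M := chain_phi_le hrB hN₂ hrest₂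
        have hk₁ : Phi rB M - Phi rB N₁ ≤ k := by omega
        have hk₂ : Phi rB M - Phi rB N₂ ≤ k := by omega
        by_cases hpe : rotPairs σ = rotPairs ρ'
        · have h12 : N₁ = N₂ := same_pairs_same_elim hrB hpe hstep₁ hstep₂
          rcases List.mem_cons.1 hρ with rfl | hρ''
          · exact ⟨σ, List.mem_cons_self, hpe⟩
          · obtain ⟨x, hx, hxe⟩ := ih N₁ L₁' L₂' hN₁ hk₁ hrest₁ (h12 ▸ hrest₂) ρ hρ''
            exact ⟨x, List.mem_cons_of_mem _ hx, hxe⟩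
        · have heσ := hstep₁.1
          have heρ' := hstep₂.1
          have hexpA : Exposed rB rG N₁ ρ' := commute_exposed hrB heσ heρ' hpe hstep₁
          have hexpB : Exposed rB rG N₂ σ :=
            commute_exposed hrB heρ' heσ (fun h => hpe h.symm) hstep₂
          have hstep₃ : Eliminates rB rG N₁ ρ' (elim N₁ ρ' hexpA) := elim_spec hexpA
          have hstep₄ : Eliminates rB rG N₂ σ (elim N₂ σ hexpB) := elim_spec hexpB
          have h34 : elim N₁ ρ' hexpA = elim N₂ σ hexpB :=
            commute_elim hrB heσ heρ' hpe hstep₁ hstep₂ hstep₃ hstep₄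
          have hN₃ := elim_stable hN₁ hstep₃
          have hM : StableM rB rG M := chain_stable hrB hN₁ hrest₁
          have hle₃ : ∀ b, rB b (elim N₁ ρ' hexpA b) ≤ rB b (M b) := by
            intro b
            by_cases hbρ' : ∃ j, b = ρ'.bs j
            · obtain ⟨j, rfl⟩ := hbρ'
              rw [hstep₃.2.1 j, ← hstep₂.2.1 j]
              exact chain_le hrB hN₂ hrest₂ _
            · push_neg at hbρ'
              rw [hstep₃.2.2 _ hbρ']
              exact chain_le hrB hN₁ hrest₁ b
          obtain ⟨D, hD⟩ := chain_exists hrB hrG hN₃ hM hle₃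
          have hchainA : ElimChain rB rG N₁ (ρ' :: D) M := ⟨_, hstep₃, hD⟩
          have hchainB : ElimChain rB rG N₂ (σ :: D) M := ⟨_, hstep₄, h34 ▸ hD⟩
          rcases List.mem_cons.1 hρ with rfl | hρ''
          · obtain ⟨x, hx, hxe⟩ := ih N₁ L₁' (ρ :: D) hN₁ hk₁ hrest₁ hchainA ρ
              (List.mem_cons_self)
            exact ⟨x, List.mem_cons_of_mem _ hx, hxe⟩
          · obtain ⟨y, hy, hye⟩ := ih N₂ (σ :: D) L₂' hN₂ hk₂ hchainB hrest₂ ρ hρ''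
            rcases List.mem_cons.1 hy with rfl | hyD
            · exact ⟨y, List.mem_cons_self, hye⟩
            · obtain ⟨x, hx, hxe⟩ := ih N₁ L₁' (ρ' :: D) hN₁ hk₁ hrest₁ hchainA y
                (List.mem_cons_of_mem _ hyD)
              exact ⟨x, List.mem_cons_of_mem _ hx, hxe.trans hye⟩

end Lattice

section Endgame
variable [Fintype G] [DecidableEq B] [DecidableEq G]
variable (hrB : ∀ b, Function.Injective (rB b)) (hrG : ∀ g, Function.Injective (rG g))

include hrB hrG in
lemma movesTo_unique {ρ₁ ρ₂ : Rotation B G} {b : B} {g : G}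
    (h₁ : IsRotation rB rG ρ₁) (h₂ : IsRotation rB rG ρ₂)
    (m₁ : MovesTo ρ₁ b g) (m₂ : MovesTo ρ₂ b g) : rotPairs ρ₁ = rotPairs ρ₂ := by
  obtain ⟨M₁, hM₁, he₁⟩ := id h₁
  obtain ⟨M₂, hM₂, he₂⟩ := h₂
  obtain ⟨i₁, hb₁, hg₁⟩ := m₁
  obtain ⟨i₂, hb₂, hg₂⟩ := m₂
  have hstep₁ : Eliminates rB rG M₁ ρ₁ (elim M₁ ρ₁ he₁) := elim_spec he₁
  have hstep₂ : Eliminates rB rG M₂ ρ₂ (elim M₂ ρ₂ he₂) := elim_spec he₂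
  have hM₁' := elim_stable hM₁ hstep₁
  have hM₂' := elim_stable hM₂ hstep₂
  obtain ⟨K, hK, hKcase, hKle⟩ := meet_exists hrB hrG hM₁ hM₂
  obtain ⟨T, hT, hTle⟩ := join_exists hrB hrG hM₁' hM₂'
  obtain ⟨La, hLa⟩ := chain_exists hrB hrG hK hM₁ (fun x => (hKle x).1)
  obtain ⟨Lb, hLb⟩ := chain_exists hrB hrG hM₁' hT (fun x => (hTle x).1)
  obtain ⟨Lc, hLc⟩ := chain_exists hrB hrG hK hM₂ (fun x => (hKle x).2)
  obtain ⟨Ld, hLd⟩ := chain_exists hrB hrG hM₂' hT (fun x => (hTle x).2)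
  have hC1 : ElimChain rB rG K (La ++ ρ₁ :: Lb) T := chain_append hrB hLa ⟨_, hstep₁, hLb⟩
  have hC2 : ElimChain rB rG K (Lc ++ ρ₂ :: Ld) T := chain_append hrB hLc ⟨_, hstep₂, hLd⟩
  have hmem₁ : ρ₁ ∈ La ++ ρ₁ :: Lb := List.mem_append_right _ (List.mem_cons_self)
  have hmem₂ : ρ₂ ∈ Lc ++ ρ₂ :: Ld := List.mem_append_right _ (List.mem_cons_self)
  obtain ⟨σ, hσmem, hσe⟩ := trace hrB hrG _ K _ _ hK (le_refl _) hC1 hC2 ρ₂ hmem₂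
  obtain ⟨τ, hτmem, hτe⟩ := trace hrB hrG _ K _ _ hK (le_refl _) hC2 hC1 ρ₁ hmem₁
  have hp₁ : (b, ρ₁.gs i₁) ∈ rotPairs ρ₁ := ⟨i₁, by rw [hb₁]⟩
  have hp₂ : (b, ρ₂.gs i₂) ∈ rotPairs ρ₂ := ⟨i₂, by rw [hb₂]⟩
  have hpσ : (b, ρ₂.gs i₂) ∈ rotPairs σ := hσe.symm ▸ hp₂
  have hpτ : (b, ρ₁.gs i₁) ∈ rotPairs τ := hτe.symm ▸ hp₁
  have hr₁ : rB b (ρ₁.gs i₁) < rB b g := by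
    have := rank_lt_succ hrB hM₁ he₁ i₁
    rw [hb₁, hg₁] at this
    exact this
  have hr₂ : rB b (ρ₂.gs i₂) < rB b g := by
    have := rank_lt_succ hrB hM₂ he₂ i₂
    rw [hb₂, hg₂] at this
    exact this
  rcases Nat.lt_trichotomy (rB b (ρ₁.gs i₁)) (rB b (ρ₂.gs i₂)) with h | h | h
  · exfalso
    have := cross hrB hK hC1 hmem₁ hσmem hb₁ rfl hg₁ hpσ h
    omega
  · have hww : ρ₁.gs i₁ = ρ₂.gs i₂ := hrB b h
    have heq : ρ₁ = σ := uniq hrB hK hC1 hmem₁ hσmem hp₁ (hww ▸ hpσ)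
    rw [heq, hσe]
  · exfalso
    have := cross hrB hK hC2 hmem₂ hτmem hb₂ rfl hg₂ hpτ h
    omega

include hrB hrG in
lemma movesFrom_unique {ρ₁ ρ₂ : Rotation B G} {b : B} {g : G}
    (h₁ : IsRotation rB rG ρ₁) (h₂ : IsRotation rB rG ρ₂)
    (m₁ : MovesFrom ρ₁ b g) (m₂ : MovesFrom ρ₂ b g) : rotPairs ρ₁ = rotPairs ρ₂ := by
  obtain ⟨M₁, hM₁, he₁⟩ := id h₁
  obtain ⟨M₂, hM₂, he₂⟩ := h₂
  obtain ⟨i₁, hb₁, hg₁⟩ := m₁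
  obtain ⟨i₂, hb₂, hg₂⟩ := m₂
  have hstep₁ : Eliminates rB rG M₁ ρ₁ (elim M₁ ρ₁ he₁) := elim_spec he₁
  have hstep₂ : Eliminates rB rG M₂ ρ₂ (elim M₂ ρ₂ he₂) := elim_spec he₂
  have hM₁' := elim_stable hM₁ hstep₁
  have hM₂' := elim_stable hM₂ hstep₂
  obtain ⟨K, hK, hKcase, hKle⟩ := meet_exists hrB hrG hM₁ hM₂
  obtain ⟨T, hT, hTle⟩ := join_exists hrB hrG hM₁' hM₂'
  obtain ⟨La, hLa⟩ := chain_exists hrB hrG hK hM₁ (fun x => (hKle x).1)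
  obtain ⟨Lb, hLb⟩ := chain_exists hrB hrG hM₁' hT (fun x => (hTle x).1)
  obtain ⟨Lc, hLc⟩ := chain_exists hrB hrG hK hM₂ (fun x => (hKle x).2)
  obtain ⟨Ld, hLd⟩ := chain_exists hrB hrG hM₂' hT (fun x => (hTle x).2)
  have hC1 : ElimChain rB rG K (La ++ ρ₁ :: Lb) T := chain_append hrB hLa ⟨_, hstep₁, hLb⟩
  have hC2 : ElimChain rB rG K (Lc ++ ρ₂ :: Ld) T := chain_append hrB hLc ⟨_, hstep₂, hLd⟩
  have hmem₁ : ρ₁ ∈ La ++ ρ₁ :: Lb := List.mem_append_right _ (List.mem_cons_self)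
  have hmem₂ : ρ₂ ∈ Lc ++ ρ₂ :: Ld := List.mem_append_right _ (List.mem_cons_self)
  obtain ⟨σ, hσmem, hσe⟩ := trace hrB hrG _ K _ _ hK (le_refl _) hC1 hC2 ρ₂ hmem₂
  have hp₁ : (b, g) ∈ rotPairs ρ₁ := ⟨i₁, by rw [hb₁, hg₁]⟩
  have hp₂ : (b, g) ∈ rotPairs ρ₂ := ⟨i₂, by rw [hb₂, hg₂]⟩
  have hpσ : (b, g) ∈ rotPairs σ := hσe.symm ▸ hp₂
  have heq : ρ₁ = σ := uniq hrB hK hC1 hmem₁ hσmem hp₁ hpσ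
  rw [heq, hσe]

include hrB hrG in
lemma movesTo_precedes {ρ₁ ρ₂ : Rotation B G} {b : B} {g : G}
    (h₁ : IsRotation rB rG ρ₁) (m₁ : MovesTo ρ₁ b g) (m₂ : MovesFrom ρ₂ b g) :
    Precedes rB rG ρ₁ ρ₂ := by
  intro M₀ L M hopt hchain hexp
  obtain ⟨i₂, hb₂, hg₂⟩ := m₂
  have hMb : M b = g := by rw [← hb₂, hexp.1 i₂, hg₂]
  obtain ⟨M₁, hM₁, he₁⟩ := id h₁
  obtain ⟨i₁, hb₁, hg₁⟩ := id m₁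
  have hr₁ : rB b (M₁ b) < rB b g := by
    have h5 := rank_lt_succ hrB hM₁ he₁ i₁
    rw [hb₁, hg₁] at h5
    rw [← hb₁, he₁.1 i₁, hb₁]
    exact h5
  have h0 : rB b (M₀ b) ≤ rB b (M₁ b) := hopt.2 M₁ hM₁ b
  have hne : M₀ b ≠ g := by
    intro h
    rw [h] at h0
    omega
  obtain ⟨ρ'', hmem, hmv, hrot⟩ := find_mover hopt.1 hchain hne hMb
  exact ⟨ρ'', hmem, movesTo_unique hrB hrG hrot h₁ hmv m₁⟩

end Endgame

end RotAux


open RotAux in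
/-- For any boy `b` and girl `g`: at most one rotation (up to cyclic shift, i.e. up to
equality of pair sets) moves `b` to `g`, at most one moves `b` from `g`; and if `ρ₁`
moves `b` to `g` and `ρ₂` moves `b` from `g`, then `ρ₁` precedes `ρ₂` in the rotation
poset. -/
theorem rotation_uniqueness_and_precedence {B G : Type*} [Fintype B] [Fintype G]
    [DecidableEq B] [DecidableEq G]
    (rB : B → G → ℕ) (rG : G → B → ℕ)
    (hrB : ∀ b, Function.Injective (rB b)) (hrG : ∀ g, Function.Injective (rG g))
    (b : B) (g : G)
    (ρ₁ ρ₂ : Rotation B G)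
    (h₁ : IsRotation rB rG ρ₁) (h₂ : IsRotation rB rG ρ₂) :
    (MovesTo ρ₁ b g → MovesTo ρ₂ b g → rotPairs ρ₁ = rotPairs ρ₂) ∧
      (MovesFrom ρ₁ b g → MovesFrom ρ₂ b g → rotPairs ρ₁ = rotPairs ρ₂) ∧
      (MovesTo ρ₁ b g → MovesFrom ρ₂ b g → Precedes rB rG ρ₁ ρ₂) :=
  ⟨fun m₁ m₂ => movesTo_unique hrB hrG h₁ h₂ m₁ m₂,
   fun m₁ m₂ => movesFrom_unique hrB hrG h₁ h₂ m₁ m₂,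
   fun m₁ m₂ => movesTo_precedes hrB hrG h₁ m₁ m₂⟩
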